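/- Let A = [[2,1],[1,1]] ∈ SL(2,ℤ), let p = (3+√5)/2 and 1/p be its eigenvalues with eigenvectors α, β ∈ ℝ², and for x ∈ ℝ² write x = a_x α + b_x β. Define σ on the semidirect product G = ℝ² ⋊_A ℤ (with multiplication (x,n)(y,m) = (Aᵐx + y, n+m)) into SL(2,ℝ) × SL(2,ℝ) by σ(x,n) = ( [[p^{-n/2}, a_x p^{-n/2}],[0, p^{n/2}]], [[p^{n/2}, b_x p^{n/2}],[0, p^{-n/2}]] ). Then σ is an injective group homomorphism. -/

import Mathlib

/-- The map `σ : ℝ² ⋊_A ℤ → M₂(ℝ) × M₂(ℝ)` defined by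
`σ(x,n) = ([[p^{-n/2}, aₓ p^{-n/2}],[0, p^{n/2}]], [[p^{n/2}, bₓ p^{n/2}],[0, p^{-n/2}]])`,
where `aco x = aₓ` and `bco x = bₓ` are the coordinates of `x` in the eigenbasis. -/
noncomputable def sigmaMap (aco bco : (Fin 2 → ℝ) → ℝ) (p : ℝ)
    (z : (Fin 2 → ℝ) × ℤ) :
    Matrix (Fin 2) (Fin 2) ℝ × Matrix (Fin 2) (Fin 2) ℝ :=
  (!![(Real.sqrt p) ^ (-z.2), aco z.1 * (Real.sqrt p) ^ (-z.2);
      0, (Real.sqrt p) ^ z.2],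
   !![(Real.sqrt p) ^ z.2, bco z.1 * (Real.sqrt p) ^ z.2;
      0, (Real.sqrt p) ^ (-z.2)])

private lemma eig_zpow {A : Matrix (Fin 2) (Fin 2) ℝ} (hdet : IsUnit A.det)
    {v : Fin 2 → ℝ} {μ : ℝ} (hμ : μ ≠ 0) (hv : A.mulVec v = μ • v) :
    ∀ m : ℤ, (A ^ m).mulVec v = μ ^ m • v := by
  have hinv : A⁻¹.mulVec v = μ⁻¹ • v := by
    have h1 : A⁻¹.mulVec (A.mulVec v) = v := by
      rw [Matrix.mulVec_mulVec, Matrix.nonsing_inv_mul A hdet, Matrix.one_mulVec]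
    rw [hv, Matrix.mulVec_smul] at h1
    have := congrArg (fun w => μ⁻¹ • w) h1
    simp only [smul_smul, inv_mul_cancel₀ hμ, one_smul] at this
    exact this
  intro m
  induction m using Int.induction_on with
  | zero => simp [Matrix.one_mulVec]
  | succ k ih =>
      rw [Matrix.zpow_add_one hdet, ← Matrix.mulVec_mulVec, hv, Matrix.mulVec_smul, ih,
        smul_smul, zpow_add_one₀ hμ]
      ring_nf
  | pred k ih =>
      rw [Matrix.zpow_sub_one hdet, ← Matrix.mulVec_mulVec, hinv, Matrix.mulVec_smul, ih,
        smul_smul, zpow_sub_one₀ hμ]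
      ring_nf


/-- For `A = [[2,1],[1,1]]` with eigenvalues `p = (3+√5)/2` and `1/p`,
eigenvectors `α, β`, and coordinates `x = aₓ α + bₓ β`, the map `σ` is an
injective group homomorphism of `G = ℝ² ⋊_A ℤ` (with multiplication
`(x,n)(y,m) = (Aᵐ x + y, n + m)`) into `SL(2,ℝ) × SL(2,ℝ)`. -/
theorem stmt_18 (α β : Fin 2 → ℝ) (hα0 : α ≠ 0) (hβ0 : β ≠ 0)
    (hα : (!![2, 1; 1, 1] : Matrix (Fin 2) (Fin 2) ℝ).mulVec α =
      ((3 + Real.sqrt 5) / 2) • α)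
    (hβ : (!![2, 1; 1, 1] : Matrix (Fin 2) (Fin 2) ℝ).mulVec β =
      ((3 + Real.sqrt 5) / 2)⁻¹ • β)
    (aco bco : (Fin 2 → ℝ) → ℝ)
    (hdecomp : ∀ x : Fin 2 → ℝ, x = aco x • α + bco x • β) :
    (∀ z : (Fin 2 → ℝ) × ℤ,
      (sigmaMap aco bco ((3 + Real.sqrt 5) / 2) z).1.det = 1 ∧
      (sigmaMap aco bco ((3 + Real.sqrt 5) / 2) z).2.det = 1) ∧
    Function.Injective (sigmaMap aco bco ((3 + Real.sqrt 5) / 2)) ∧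
    ∀ (x y : Fin 2 → ℝ) (n m : ℤ),
      sigmaMap aco bco ((3 + Real.sqrt 5) / 2)
          (((!![2, 1; 1, 1] : Matrix (Fin 2) (Fin 2) ℝ) ^ m).mulVec x + y, n + m) =
        sigmaMap aco bco ((3 + Real.sqrt 5) / 2) (x, n) *
          sigmaMap aco bco ((3 + Real.sqrt 5) / 2) (y, m) := by
  set p : ℝ := (3 + Real.sqrt 5) / 2 with hp
  have h5 : (2:ℝ) < Real.sqrt 5 := by
    have : (2:ℝ) = Real.sqrt 4 := by
      rw [show (4:ℝ) = 2^2 by norm_num, Real.sqrt_sq (by norm_num)]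
    rw [this]
    exact Real.sqrt_lt_sqrt (by norm_num) (by norm_num)
  have hp1 : (1:ℝ) < p := by rw [hp]; linarith
  have hp0 : (0:ℝ) < p := by linarith
  have hpne : p ≠ 0 := ne_of_gt hp0
  set s : ℝ := Real.sqrt p with hs
  have hs1 : (1:ℝ) < s := by
    rw [hs, show (1:ℝ) = Real.sqrt 1 by simp]
    exact Real.sqrt_lt_sqrt (by norm_num) hp1
  have hs0 : (0:ℝ) < s := by linarith
  have hsne : s ≠ 0 := ne_of_gt hs0
  have hsq : s ^ (2:ℕ) = p := Real.sq_sqrt hp0.le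
  have hdet : IsUnit (!![2, 1; 1, 1] : Matrix (Fin 2) (Fin 2) ℝ).det := by
    rw [Matrix.det_fin_two_of]; norm_num
  have heigα := eig_zpow hdet hpne hα
  have heigβ := eig_zpow hdet (inv_ne_zero hpne) hβ
  -- linear independence
  have hli : ∀ c d : ℝ, c • α + d • β = 0 → c = 0 ∧ d = 0 := by
    intro c d h
    have h2 : c • (p • α) + d • (p⁻¹ • β) = 0 := by
      rw [← hα, ← hβ, ← Matrix.mulVec_smul, ← Matrix.mulVec_smul, ← Matrix.mulVec_add, h,
        Matrix.mulVec_zero]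
    have h3 : (c * (p - p⁻¹)) • α = 0 := by
      have e : (c * (p - p⁻¹)) • α = (c • p • α + d • p⁻¹ • β) - p⁻¹ • (c • α + d • β) := by
        module
      rw [e, h2, h, smul_zero, sub_zero]
    have hpp : p - p⁻¹ ≠ 0 := by
      have : p⁻¹ < 1 := inv_lt_one_of_one_lt₀ hp1
      intro hc; nlinarith
    have hc : c = 0 := by
      rcases smul_eq_zero.mp h3 with h | h
      · exact (mul_eq_zero.mp h).resolve_right hpp
      · exact absurd h hα0
    refine ⟨hc, ?_⟩
    rw [hc, zero_smul, zero_add] at h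
    rcases smul_eq_zero.mp h with h | h
    · exact h
    · exact absurd h hβ0
  have hcoord : ∀ (u : Fin 2 → ℝ) (c d : ℝ), u = c • α + d • β → aco u = c ∧ bco u = d := by
    intro u c d h
    have h2 : (aco u - c) • α + (bco u - d) • β = 0 := by
      have := (hdecomp u).symm.trans h
      rw [sub_smul, sub_smul]
      rw [← sub_eq_zero] at this
      rw [← this]; abel
    obtain ⟨h3, h4⟩ := hli _ _ h2
    constructor <;> [linarith [sub_eq_zero.mp (by exact h3)]; linarith]
  refine ⟨?_, ?_, ?_⟩
  · intro z
    constructor <;>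
    · simp only [sigmaMap, Matrix.det_fin_two_of]
      rw [← zpow_add₀ hsne]
      simp
  · rintro ⟨x, n⟩ ⟨y, m⟩ h
    simp only [sigmaMap, Prod.mk.injEq] at h
    obtain ⟨h1, h2⟩ := h
    have e11 : s ^ n = s ^ m := by
      have := congrFun (congrFun h1 1) 1
      simpa using this
    have hnm : n = m := zpow_right_injective₀ hs0 (ne_of_gt hs1) e11
    subst hnm
    have e01 : aco x * s ^ (-n) = aco y * s ^ (-n) := by
      have := congrFun (congrFun h1 0) 1
      simpa using this
    have e01' : bco x * s ^ n = bco y * s ^ n := by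
      have := congrFun (congrFun h2 0) 1
      simpa using this
    have ha : aco x = aco y := mul_right_cancel₀ (zpow_ne_zero _ hsne) e01
    have hb : bco x = bco y := mul_right_cancel₀ (zpow_ne_zero _ hsne) e01'
    have : x = y := by rw [hdecomp x, hdecomp y, ha, hb]
    simp [this]
  · intro x y n m
    have hdec : ((!![2, 1; 1, 1] : Matrix (Fin 2) (Fin 2) ℝ) ^ m).mulVec x + y
        = (aco x * p ^ m + aco y) • α + (bco x * p⁻¹ ^ m + bco y) • β := by
      conv_lhs => rw [hdecomp x, hdecomp y]
      rw [Matrix.mulVec_add, Matrix.mulVec_smul, Matrix.mulVec_smul, heigα, heigβ]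
      module
    obtain ⟨hacoord, hbcoord⟩ := hcoord _ _ _ hdec
    have hpm : ∀ k : ℤ, p ^ k = s ^ k * s ^ k := by
      intro k
      rw [← hsq, ← zpow_natCast s 2, ← zpow_mul]
      rw [← zpow_add₀ hsne]
      ring_nf
    simp only [sigmaMap, Prod.mk_mul_mk, Prod.mk.injEq]
    constructor
    · rw [Matrix.mul_fin_two, hacoord]
      ext i j
      fin_cases i <;> fin_cases j <;>
        simp only [Matrix.cons_val', Matrix.cons_val_zero, Matrix.cons_val_one,
          Matrix.head_cons, Matrix.empty_val', Matrix.cons_val_fin_one, Matrix.head_fin_const,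
          Fin.isValue, Matrix.of_apply, Fin.zero_eta, Fin.mk_one] <;>
        simp only [neg_add, zpow_add₀ hsne, zpow_sub₀ hsne, zpow_neg, hpm, inv_zpow, ← hs] <;>
        field_simp <;> ring
    · rw [Matrix.mul_fin_two, hbcoord]
      ext i j
      fin_cases i <;> fin_cases j <;>
        simp only [Matrix.cons_val', Matrix.cons_val_zero, Matrix.cons_val_one,
          Matrix.head_cons, Matrix.empty_val', Matrix.cons_val_fin_one, Matrix.head_fin_const,
          Fin.isValue, Matrix.of_apply, Fin.zero_eta, Fin.mk_one] <;>
        simp only [neg_add, zpow_add₀ hsne, zpow_sub₀ hsne, zpow_neg, hpm, inv_zpow, ← hs] <;>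
        field_simp <;> ring
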